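/- In Construction I, the restriction of H*_{n_1,n_2,...,n_s} to X' = {(x_2, x_2, x_3, ..., x_s) : x_j ∈ [n_j], j ∈ {2,...,s}} ∩ X* (i.e., the derived sub-hypergraph on the vertices of X* whose first two coordinates are equal) is isomorphic to H*_{n_2,n_3,...,n_s}. -/

import Mathlib

/-- A mixed hypergraph on vertex type `V`: families of C-edges and D-edges. -/
structure MixedHypergraph (V : Type*) where
  Cedges : Set (Set V)
  Dedges : Set (Set V)

/-- A strict `k`-coloring: a surjective coloring with `k` colors such that every
C-edge has two distinct vertices with a common color and every D-edge has two
distinct vertices with distinct colors. -/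
def IsStrictColoring {V : Type*} (H : MixedHypergraph V) (k : ℕ) (f : V → Fin k) : Prop :=
  Function.Surjective f ∧
  (∀ e ∈ H.Cedges, ∃ u ∈ e, ∃ v ∈ e, u ≠ v ∧ f u = f v) ∧
  (∀ e ∈ H.Dedges, ∃ u ∈ e, ∃ v ∈ e, u ≠ v ∧ f u ≠ f v)

/-- The feasible set of a mixed hypergraph. -/
def FeasibleSet {V : Type*} (H : MixedHypergraph V) : Set ℕ :=
  {k | ∃ f : V → Fin k, IsStrictColoring H k f}

/-- Two colorings induce the same partition of the vertex set. -/
def SamePartition {V : Type*} {k k' : ℕ} (f : V → Fin k) (g : V → Fin k') : Prop :=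
  ∀ u v, f u = f v ↔ g u = g v

/-- `H` is a one-realization of `S`: its feasible set is `S` and for each `k`
the partition induced by a strict `k`-coloring is unique. -/
def IsOneRealization {V : Type*} (H : MixedHypergraph V) (S : Set ℕ) : Prop :=
  FeasibleSet H = S ∧
  ∀ (k : ℕ) (f g : V → Fin k), IsStrictColoring H k f → IsStrictColoring H k g →
    SamePartition f g

/-- Vertex set of Construction I: `X* ⊆ [n₁] × ⋯ × [n_s]` consists of the diagonal
vertices `(i,…,i)` for `i ∈ [n_s - 1]`; for each `2 ≤ t ≤ s` and `n_t ≤ j ≤ n_{t-1}-1`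
the vertices `(j,…,j,n_t,…,n_s)` and `(j,…,j,1,…,1)` (`j` repeated `t-1` times);
and `(n₁,…,n_s)`.  (Index `t` of the paper corresponds to `t.val + 1` here.) -/
def XstarGen (s : ℕ) (n : Fin s → ℕ) : Set (Fin s → ℕ) :=
  {x | (∃ last : Fin s, (last : ℕ) + 1 = s ∧ ∃ i, 1 ≤ i ∧ i + 1 ≤ n last ∧ ∀ k, x k = i) ∨
       (∃ t u : Fin s, (u : ℕ) + 1 = (t : ℕ) ∧ ∃ j, n t ≤ j ∧ j + 1 ≤ n u ∧
         ((∀ k : Fin s, ((k : ℕ) < (t : ℕ) → x k = j) ∧ ((t : ℕ) ≤ (k : ℕ) → x k = n k)) ∨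
          (∀ k : Fin s, ((k : ℕ) < (t : ℕ) → x k = j) ∧ ((t : ℕ) ≤ (k : ℕ) → x k = 1)))) ∨
       (∀ k, x k = n k)}

/-- The Construction-I mixed hypergraph on a vertex set `X` of `s`-tuples:
D-edges are pairs of vertices differing in every coordinate, and C-edges are
triples of distinct vertices such that every coordinate takes exactly two
distinct values among the three. -/
def HstarOn {s : ℕ} (X : Set (Fin s → ℕ)) : MixedHypergraph X where
  Cedges := {e | ∃ u v w : X, u ≠ v ∧ u ≠ w ∧ v ≠ w ∧ e = {u, v, w} ∧
    ∀ k : Fin s, ({(u : Fin s → ℕ) k, (v : Fin s → ℕ) k, (w : Fin s → ℕ) k} : Finset ℕ).card = 2}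
  Dedges := {e | ∃ u v : X, e = {u, v} ∧ ∀ k : Fin s, (u : Fin s → ℕ) k ≠ (v : Fin s → ℕ) k}

/-- The set `X'` of vertices of `X*` whose first two coordinates are equal. -/
def XstarDiag (s : ℕ) (n : Fin s → ℕ) (hs : 2 ≤ s) : Set (Fin s → ℕ) :=
  XstarGen s n ∩ {x | x ⟨0, Nat.lt_of_lt_of_le Nat.zero_lt_two hs⟩ = x ⟨1, hs⟩}

/-- The parameter sequence `(n₂, n₃, …, n_s)`. -/
def shiftParams (s : ℕ) (n : Fin s → ℕ) : Fin (s - 1) → ℕ :=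
  fun i => n ⟨(i : ℕ) + 1, by have := i.isLt; omega⟩

namespace HstarIsoAux

/-- Drop the first coordinate. -/
def tailF (s : ℕ) (x : Fin s → ℕ) : Fin (s-1) → ℕ :=
  fun i => x ⟨(i : ℕ) + 1, by have := i.isLt; omega⟩

/-- Duplicate the first coordinate. -/
def liftF (s : ℕ) (hs : 2 ≤ s) (y : Fin (s-1) → ℕ) : Fin s → ℕ :=
  fun k => if (k : ℕ) = 0 then y ⟨0, by omega⟩ else y ⟨(k : ℕ) - 1, by have := k.isLt; omega⟩

lemma shift_eq {s : ℕ} (n : Fin s → ℕ) (k : Fin s) (i : Fin (s-1)) (h : (k:ℕ) = (i:ℕ)+1) :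
    n k = shiftParams s n i := congrArg n (Fin.ext h)

lemma tail_lift (s : ℕ) (hs : 2 ≤ s) (y : Fin (s-1) → ℕ) : tailF s (liftF s hs y) = y := by
  funext k
  simp [tailF, liftF]

lemma lift_diag (s : ℕ) (hs : 2 ≤ s) (y : Fin (s-1) → ℕ) :
    liftF s hs y ⟨0, by omega⟩ = liftF s hs y ⟨1, hs⟩ := by
  simp [liftF]

lemma lift_tail (s : ℕ) (hs : 2 ≤ s) (x : Fin s → ℕ)
    (hd : x ⟨0, by omega⟩ = x ⟨1, hs⟩) : liftF s hs (tailF s x) = x := by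
  funext k
  by_cases h : (k : ℕ) = 0
  · have h1 : liftF s hs (tailF s x) k = tailF s x ⟨0, by omega⟩ := if_pos h
    have h2 : k = ⟨0, by omega⟩ := Fin.ext h
    rw [h1, h2]
    exact hd.symm
  · have h1 : liftF s hs (tailF s x) k = tailF s x ⟨(k:ℕ) - 1, by have := k.isLt; omega⟩ :=
      if_neg h
    rw [h1]
    show x ⟨(k:ℕ) - 1 + 1, _⟩ = x k
    congr 1
    exact Fin.ext (by show (k:ℕ) - 1 + 1 = (k:ℕ); omega)

set_option maxHeartbeats 1000000 in
lemma mem_forward (s : ℕ) (hs : 2 ≤ s) (n : Fin s → ℕ) (hanti : StrictAnti n)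
    (h2 : 2 ≤ n ⟨s - 1, Nat.sub_lt (Nat.lt_of_lt_of_le Nat.zero_lt_two hs) Nat.one_pos⟩) (x : Fin s → ℕ)
    (hx : x ∈ XstarGen s n) (hd : x ⟨0, by omega⟩ = x ⟨1, hs⟩) :
    tailF s x ∈ XstarGen (s-1) (shiftParams s n) := by
  obtain ⟨last, hlast, i, hi1, hi2, hxi⟩ | ⟨t, u, hut, j, hj1, hj2, hvar⟩ | hC := hx
  · left
    refine ⟨⟨s-2, by omega⟩, by show s - 2 + 1 = s - 1; omega, i, hi1, ?_, fun k => hxi _⟩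
    exact hi2.trans (le_of_eq (shift_eq n last ⟨s-2, by omega⟩
      (show (last:ℕ) = s - 2 + 1 by omega)))
  · by_cases ht : (t : ℕ) = 1
    · rcases hvar with h1 | h1
      · right; right
        intro k
        exact ((h1 ⟨(k:ℕ)+1, by have := k.isLt; omega⟩).2
          (show (t:ℕ) ≤ (k:ℕ)+1 by omega)).trans
          (shift_eq n ⟨(k:ℕ)+1, by have := k.isLt; omega⟩ k rfl)
      · exfalso
        have hx0 : x ⟨0, by omega⟩ = j :=
          (h1 ⟨0, by omega⟩).1 (show (0:ℕ) < (t:ℕ) by omega)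
        have hx1 : x ⟨1, hs⟩ = 1 :=
          (h1 ⟨1, hs⟩).2 (show (t:ℕ) ≤ 1 by omega)
        have hj : j = 1 := by rw [← hx0, hd, hx1]
        have hle : t ≤ (⟨s-1, by omega⟩ : Fin s) := by
          rw [Fin.le_def]
          show (t:ℕ) ≤ s - 1
          have := t.isLt; omega
        have hnt : 2 ≤ n t := le_trans h2 (hanti.antitone hle)
        omega
    · have ht2 : 2 ≤ (t : ℕ) := by omega
      have htlt := t.isLt
      right; left
      refine ⟨⟨(t:ℕ)-1, by omega⟩, ⟨(t:ℕ)-2, by omega⟩,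
        by show (t:ℕ) - 2 + 1 = (t:ℕ) - 1; omega, j, ?_, ?_, ?_⟩
      · exact (le_of_eq (shift_eq n t ⟨(t:ℕ)-1, by omega⟩
          (show (t:ℕ) = (t:ℕ)-1+1 by omega)).symm).trans hj1
      · exact hj2.trans (le_of_eq (shift_eq n u ⟨(t:ℕ)-2, by omega⟩
          (show (u:ℕ) = (t:ℕ)-2+1 by omega)))
      · rcases hvar with h1 | h1
        · left
          intro k
          have hklt := k.isLt
          constructor
          · intro hk
            have hk' : (k:ℕ) < (t:ℕ) - 1 := hk
            exact (h1 ⟨(k:ℕ)+1, by omega⟩).1 (show (k:ℕ)+1 < (t:ℕ) by omega)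
          · intro hk
            have hk' : (t:ℕ) - 1 ≤ (k:ℕ) := hk
            exact ((h1 ⟨(k:ℕ)+1, by omega⟩).2 (show (t:ℕ) ≤ (k:ℕ)+1 by omega)).trans
              (shift_eq n ⟨(k:ℕ)+1, by omega⟩ k rfl)
        · right
          intro k
          have hklt := k.isLt
          constructor
          · intro hk
            have hk' : (k:ℕ) < (t:ℕ) - 1 := hk
            exact (h1 ⟨(k:ℕ)+1, by omega⟩).1 (show (k:ℕ)+1 < (t:ℕ) by omega)
          · intro hk
            have hk' : (t:ℕ) - 1 ≤ (k:ℕ) := hk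
            exact (h1 ⟨(k:ℕ)+1, by omega⟩).2 (show (t:ℕ) ≤ (k:ℕ)+1 by omega)
  · exfalso
    have h01 : (⟨0, by omega⟩ : Fin s) < ⟨1, hs⟩ := by
      rw [Fin.lt_def]; show (0:ℕ) < 1; omega
    have hlt := hanti h01
    have key : n ⟨0, by omega⟩ = n ⟨1, hs⟩ := (hC _).symm.trans (hd.trans (hC _))
    exact absurd key (ne_of_gt hlt)

set_option maxHeartbeats 1000000 in
lemma mem_backward (s : ℕ) (hs : 2 ≤ s) (n : Fin s → ℕ) (hanti : StrictAnti n)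
    (y : Fin (s-1) → ℕ) (hy : y ∈ XstarGen (s-1) (shiftParams s n)) :
    liftF s hs y ∈ XstarGen s n := by
  obtain ⟨last, hlast, i, hi1, hi2, hyi⟩ | ⟨t, u, hut, j, hj1, hj2, hvar⟩ | hC := hy
  · left
    refine ⟨⟨s-1, by omega⟩, by show s - 1 + 1 = s; omega, i, hi1, ?_, ?_⟩
    · exact hi2.trans (le_of_eq ((shift_eq n ⟨s-1, by omega⟩ last
        (show s - 1 = (last:ℕ) + 1 by omega)).symm))
    · intro k
      simp only [liftF]
      split <;> exact hyi _
  · have htlt := t.isLt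
    have ht1 : 1 ≤ (t : ℕ) := by omega
    right; left
    refine ⟨⟨(t:ℕ)+1, by omega⟩, ⟨(t:ℕ), by omega⟩,
      by show (t:ℕ) + 1 = (t:ℕ) + 1; rfl, j, ?_, ?_, ?_⟩
    · exact (le_of_eq (shift_eq n ⟨(t:ℕ)+1, by omega⟩ t rfl)).trans hj1
    · exact hj2.trans (le_of_eq (shift_eq n ⟨(t:ℕ), by omega⟩ u
        (show (t:ℕ) = (u:ℕ)+1 by omega)).symm)
    · rcases hvar with h1 | h1
      · left
        intro k
        have hklt := k.isLt
        constructor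
        · intro hk
          have hk' : (k:ℕ) < (t:ℕ) + 1 := hk
          simp only [liftF]
          split
          · exact (h1 ⟨0, by omega⟩).1 (show (0:ℕ) < (t:ℕ) by omega)
          · exact (h1 ⟨(k:ℕ)-1, by omega⟩).1 (show (k:ℕ)-1 < (t:ℕ) by omega)
        · intro hk
          have hk' : (t:ℕ) + 1 ≤ (k:ℕ) := hk
          simp only [liftF]
          rw [if_neg (by omega)]
          exact ((h1 ⟨(k:ℕ)-1, by omega⟩).2 (show (t:ℕ) ≤ (k:ℕ)-1 by omega)).trans
            ((shift_eq n k ⟨(k:ℕ)-1, by omega⟩ (show (k:ℕ) = (k:ℕ)-1+1 by omega)).symm)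
      · right
        intro k
        have hklt := k.isLt
        constructor
        · intro hk
          have hk' : (k:ℕ) < (t:ℕ) + 1 := hk
          simp only [liftF]
          split
          · exact (h1 ⟨0, by omega⟩).1 (show (0:ℕ) < (t:ℕ) by omega)
          · exact (h1 ⟨(k:ℕ)-1, by omega⟩).1 (show (k:ℕ)-1 < (t:ℕ) by omega)
        · intro hk
          have hk' : (t:ℕ) + 1 ≤ (k:ℕ) := hk
          simp only [liftF]
          rw [if_neg (by omega)]
          exact (h1 ⟨(k:ℕ)-1, by omega⟩).2 (show (t:ℕ) ≤ (k:ℕ)-1 by omega)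
  · right; left
    have hlt : (⟨0, by omega⟩ : Fin s) < ⟨1, hs⟩ := by
      rw [Fin.lt_def]; show (0:ℕ) < 1; omega
    have hmono := hanti hlt
    refine ⟨⟨1, hs⟩, ⟨0, by omega⟩, by show (0:ℕ) + 1 = 1; rfl, n ⟨1, hs⟩, le_refl _,
      by omega, ?_⟩
    left
    intro k
    have hklt := k.isLt
    constructor
    · intro hk
      have hk' : (k:ℕ) < 1 := hk
      simp only [liftF]
      rw [if_pos (by omega)]
      exact (hC ⟨0, by omega⟩).trans ((shift_eq n ⟨1, hs⟩ ⟨0, by omega⟩ rfl).symm)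
    · intro hk
      have hk' : (1:ℕ) ≤ (k:ℕ) := hk
      simp only [liftF]
      rw [if_neg (by omega)]
      exact (hC ⟨(k:ℕ)-1, by omega⟩).trans
        ((shift_eq n k ⟨(k:ℕ)-1, by omega⟩ (show (k:ℕ) = (k:ℕ)-1+1 by omega)).symm)

end HstarIsoAux


namespace HstarIsoAux

lemma ne_transfer (s : ℕ) (hs : 2 ≤ s) (a b : Fin s → ℕ)
    (da : a ⟨0, by omega⟩ = a ⟨1, hs⟩) (db : b ⟨0, by omega⟩ = b ⟨1, hs⟩) :
    (∀ k : Fin s, a k ≠ b k) ↔ (∀ k : Fin (s-1), tailF s a k ≠ tailF s b k) := by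
  constructor
  · intro h k
    exact h ⟨(k:ℕ)+1, by have := k.isLt; omega⟩
  · intro h k
    by_cases hk : (k:ℕ) = 0
    · rw [show k = ⟨0, by omega⟩ from Fin.ext hk]
      intro heq
      exact h ⟨0, by omega⟩ (da.symm.trans (heq.trans db))
    · have hklt := k.isLt
      rw [show k = ⟨(k:ℕ)-1+1, by omega⟩ from Fin.ext (by show (k:ℕ) = (k:ℕ)-1+1; omega)]
      exact h ⟨(k:ℕ)-1, by omega⟩

lemma card_transfer (s : ℕ) (hs : 2 ≤ s) (a b c : Fin s → ℕ)
    (da : a ⟨0, by omega⟩ = a ⟨1, hs⟩) (db : b ⟨0, by omega⟩ = b ⟨1, hs⟩)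
    (dc : c ⟨0, by omega⟩ = c ⟨1, hs⟩) :
    (∀ k : Fin s, ({a k, b k, c k} : Finset ℕ).card = 2) ↔
    (∀ k : Fin (s-1), ({tailF s a k, tailF s b k, tailF s c k} : Finset ℕ).card = 2) := by
  constructor
  · intro h k
    exact h ⟨(k:ℕ)+1, by have := k.isLt; omega⟩
  · intro h k
    by_cases hk : (k:ℕ) = 0
    · rw [show k = ⟨0, by omega⟩ from Fin.ext hk, da, db, dc]
      exact h ⟨0, by omega⟩
    · have hklt := k.isLt
      rw [show k = ⟨(k:ℕ)-1+1, by omega⟩ from Fin.ext (by show (k:ℕ) = (k:ℕ)-1+1; omega)]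
      exact h ⟨(k:ℕ)-1, by omega⟩

/-- The bijection. -/
def phiEquiv (s : ℕ) (hs : 2 ≤ s) (n : Fin s → ℕ) (hanti : StrictAnti n)
    (h2 : 2 ≤ n ⟨s - 1, Nat.sub_lt (Nat.lt_of_lt_of_le Nat.zero_lt_two hs) Nat.one_pos⟩) :
    ↥(XstarDiag s n hs) ≃ ↥(XstarGen (s - 1) (shiftParams s n)) where
  toFun x := ⟨tailF s x.1, mem_forward s hs n hanti h2 x.1 x.2.1 x.2.2⟩
  invFun y := ⟨liftF s hs y.1, mem_backward s hs n hanti y.1 y.2, lift_diag s hs y.1⟩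
  left_inv x := Subtype.ext (lift_tail s hs x.1 x.2.2)
  right_inv y := Subtype.ext (tail_lift s hs y.1)

end HstarIsoAux

/-- the derived sub-hypergraph of `H*_{n₁,…,n_s}` on the set `X'` of
vertices of `X*` whose first two coordinates are equal is isomorphic to
`H*_{n₂,…,n_s}`: there is a bijection of vertex sets mapping C-edges onto C-edges
and D-edges onto D-edges. -/
theorem Hstar_derived_iso (s : ℕ) (hs : 2 ≤ s) (n : Fin s → ℕ)
    (hanti : StrictAnti n) (h2 : 2 ≤ n ⟨s - 1, by omega⟩) :
    ∃ φ : ↥(XstarDiag s n hs) ≃ ↥(XstarGen (s - 1) (shiftParams s n)),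
      (∀ e : Set ↥(XstarDiag s n hs),
        e ∈ (HstarOn (XstarDiag s n hs)).Cedges ↔
          φ '' e ∈ (HstarOn (XstarGen (s - 1) (shiftParams s n))).Cedges) ∧
      (∀ e : Set ↥(XstarDiag s n hs),
        e ∈ (HstarOn (XstarDiag s n hs)).Dedges ↔
          φ '' e ∈ (HstarOn (XstarGen (s - 1) (shiftParams s n))).Dedges) := by
  set φ := HstarIsoAux.phiEquiv s hs n hanti h2 with hφ
  have htail : ∀ x : ↥(XstarDiag s n hs), ((φ x : Fin (s-1) → ℕ)) = HstarIsoAux.tailF s (x : Fin s → ℕ) :=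
    fun x => rfl
  have hsymm : ∀ a : ↥(XstarGen (s - 1) (shiftParams s n)),
      HstarIsoAux.tailF s ((φ.symm a : Fin s → ℕ)) = (a : Fin (s-1) → ℕ) := by
    intro a
    rw [← htail (φ.symm a), φ.apply_symm_apply]
  refine ⟨φ, fun e => ?_, fun e => ?_⟩
  · constructor
    · rintro ⟨u, v, w, huv, huw, hvw, rfl, hcard⟩
      refine ⟨φ u, φ v, φ w, φ.injective.ne huv, φ.injective.ne huw, φ.injective.ne hvw, ?_, ?_⟩
      · simp only [Set.image_insert_eq, Set.image_singleton]
      · intro k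
        rw [htail u, htail v, htail w]
        exact (HstarIsoAux.card_transfer s hs _ _ _ u.2.2 v.2.2 w.2.2).mp hcard k
    · rintro ⟨a, b, c, hab, hac, hbc, him, hcard⟩
      have he : e = {φ.symm a, φ.symm b, φ.symm c} := by
        rw [← Equiv.symm_image_image φ e, him]
        simp only [Set.image_insert_eq, Set.image_singleton]
      refine ⟨φ.symm a, φ.symm b, φ.symm c, φ.symm.injective.ne hab,
        φ.symm.injective.ne hac, φ.symm.injective.ne hbc, he, ?_⟩
      refine (HstarIsoAux.card_transfer s hs _ _ _ (φ.symm a).2.2 (φ.symm b).2.2 (φ.symm c).2.2).mpr ?_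
      intro k
      rw [congrFun (hsymm a) k, congrFun (hsymm b) k, congrFun (hsymm c) k]
      exact hcard k
  · constructor
    · rintro ⟨u, v, rfl, hne⟩
      refine ⟨φ u, φ v, ?_, ?_⟩
      · simp only [Set.image_insert_eq, Set.image_singleton]
      · intro k
        rw [htail u, htail v]
        exact (HstarIsoAux.ne_transfer s hs _ _ u.2.2 v.2.2).mp hne k
    · rintro ⟨a, b, him, hne⟩
      have he : e = {φ.symm a, φ.symm b} := by
        rw [← Equiv.symm_image_image φ e, him]
        simp only [Set.image_insert_eq, Set.image_singleton]
      refine ⟨φ.symm a, φ.symm b, he, ?_⟩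
      refine (HstarIsoAux.ne_transfer s hs _ _ (φ.symm a).2.2 (φ.symm b).2.2).mpr ?_
      intro k
      rw [congrFun (hsymm a) k, congrFun (hsymm b) k]
      exact hne k
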